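/- Let λ be an eigenvalue of the recursion, E = Ker φ_{p+1}(λ) and E♯ = Ker φ_{p+1}(λ̄ = λ)ᴴ, with orthogonal projections P and P♯. Then φ_p(λ) maps E into E♯, i.e., P♯ φ_p(λ) P = φ_p(λ) P. -/
import Mathlib


open Matrix

/-- For a real root `λ` of `det φ_{p+1}`, with `P`, `P♯` the orthogonal projections
onto `E = Ker φ_{p+1}(λ)` and `E♯ = Ker φ_{p+1}(λ)ᴴ`, the matrix `φ_p(λ)` maps `E`
into `E♯`: `P♯ φ_p(λ) P = φ_p(λ) P`. -/
theorem phi_p_maps_E_to_Esharp (m p : ℕ)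
    (a b : ℕ → Matrix (Fin m) (Fin m) ℂ)
    (ha0 : a 0 = 1) (hap : a p = 1)
    (hb : ∀ n, 1 ≤ n → n ≤ p → (b n).IsHermitian)
    (haInv : ∀ n, 1 ≤ n → n ≤ p - 1 → IsUnit (a n))
    (φ : ℕ → ℂ → Matrix (Fin m) (Fin m) ℂ)
    (hφ0 : ∀ z, φ 0 z = 0) (hφ1 : ∀ z, φ 1 z = 1)
    (hφ : ∀ (z : ℂ) (n : ℕ), 1 ≤ n → n ≤ p →
      a n * φ (n + 1) z + b n * φ n z + (a (n - 1))ᴴ * φ (n - 1) z = z • φ n z)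
    (lam : ℝ) (hroot : (φ (p + 1) (lam : ℂ)).det = 0)
    (P Ps : Matrix (Fin m) (Fin m) ℂ)
    (hPherm : Pᴴ = P) (hPidem : P * P = P)
    (hPker : ∀ h : Fin m → ℂ, φ (p + 1) (lam : ℂ) *ᵥ h = 0 ↔ P *ᵥ h = h)
    (hPsherm : Psᴴ = Ps) (hPsidem : Ps * Ps = Ps)
    (hPsker : ∀ h : Fin m → ℂ, (φ (p + 1) (lam : ℂ))ᴴ *ᵥ h = 0 ↔ Ps *ᵥ h = h) :
    Ps * (φ p (lam : ℂ) * P) = φ p (lam : ℂ) * P := by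
  set z : ℂ := (lam : ℂ) with hz
  -- key Wronskian identity
  have key : ∀ n, n ≤ p →
      (φ n z)ᴴ * (a n * φ (n+1) z) = (a n * φ (n+1) z)ᴴ * φ n z := by
    intro n hn
    induction n with
    | zero => simp [hφ0]
    | succ k ih =>
      have hk : k ≤ p := Nat.le_of_succ_le hn
      have ih' := ih hk
      have hrec := hφ z (k+1) (Nat.succ_le_succ (Nat.zero_le k)) hn
      simp only [Nat.add_sub_cancel] at hrec
      have hA : a (k+1) * φ (k+1+1) z
          = z • φ (k+1) z - b (k+1) * φ (k+1) z - (a k)ᴴ * φ k z := by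
        rw [eq_sub_iff_add_eq, eq_sub_iff_add_eq]
        rw [← hrec]; abel
      have hbH : (b (k+1))ᴴ = b (k+1) := (hb (k+1) (Nat.succ_le_succ (Nat.zero_le k)) hn).eq
      have hzc : (starRingEnd ℂ) z = z := by simp [hz]
      rw [hA]
      simp only [Matrix.conjTranspose_sub, Matrix.conjTranspose_smul,
        Matrix.conjTranspose_mul, Matrix.conjTranspose_conjTranspose, hbH, hzc,
        Matrix.mul_sub, Matrix.sub_mul, Matrix.mul_smul, Matrix.smul_mul]
      have hzs : star z = z := hzc
      simp only [hzs, mul_assoc] at *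
      rw [ih', Matrix.conjTranspose_mul, mul_assoc]
  have keyp : (φ p z)ᴴ * φ (p+1) z = (φ (p+1) z)ᴴ * φ p z := by
    have := key p le_rfl
    rwa [hap, one_mul] at this
  -- pointwise argument
  have hvec : ∀ h : Fin m → ℂ, (Ps * (φ p z * P)) *ᵥ h = (φ p z * P) *ᵥ h := by
    intro h
    have hPv : P *ᵥ (P *ᵥ h) = P *ᵥ h := by
      rw [Matrix.mulVec_mulVec, hPidem]
    have hker : φ (p+1) z *ᵥ (P *ᵥ h) = 0 := (hPker (P *ᵥ h)).2 hPv
    have h0 : (φ (p+1) z)ᴴ *ᵥ (φ p z *ᵥ (P *ᵥ h)) = 0 := by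
      rw [Matrix.mulVec_mulVec, ← keyp, ← Matrix.mulVec_mulVec, hker,
        Matrix.mulVec_zero]
    have hfin := (hPsker _).1 h0
    simp only [← Matrix.mulVec_mulVec]
    exact hfin
  ext i j
  have := congrFun (hvec (Pi.single j 1)) i
  simpa [Matrix.mulVec_single] using this
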